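/- For all n₁, n₂ ∈ ℕ and all p, q ∈ [0,1], P(n₁, p, q) ≥ (1/2) · P(n₁ + n₂, p, q). -/

import Mathlib

open Real Filter

/-- Probability that a Binomial(m, p) random variable equals `k`. -/
noncomputable def binomProb (m : ℕ) (p : ℝ) (k : ℕ) : ℝ :=
  (m.choose k : ℝ) * p ^ k * (1 - p) ^ (m - k)

/-- For independent `X ~ Binomial(m, p)` and `Y ~ Binomial(n, q)`,
the probability `Pr(Y ≥ X - ℓ)`. -/
noncomputable def prGEshift (m : ℕ) (p : ℝ) (n : ℕ) (q : ℝ) (ℓ : ℝ) : ℝ :=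
  ∑ j ∈ Finset.range (m + 1), ∑ k ∈ Finset.range (n + 1),
    if (j : ℝ) - ℓ ≤ (k : ℝ) then binomProb m p j * binomProb n q k else 0

/-- For independent `X ~ Binomial(m, p)` and `Y ~ Binomial(n, q)`,
the probability `Pr(Y ≥ X)`. -/
noncomputable def prGE (m : ℕ) (p : ℝ) (n : ℕ) (q : ℝ) : ℝ :=
  prGEshift m p n q 0

/-- `P(m, n, p, q) = Pr(Y ≥ X)` for independent `X ~ Binomial(m, max p q)`
and `Y ~ Binomial(n, min p q)`. -/
noncomputable def Pmn (m n : ℕ) (p q : ℝ) : ℝ :=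
  prGE m (max p q) n (min p q)

/-- `P(n, p, q) = P(n, n, p, q)`. -/
noncomputable def Pn (n : ℕ) (p q : ℝ) : ℝ :=
  Pmn n n p q

lemma binomProb_nonneg {p : ℝ} (h0 : 0 ≤ p) (h1 : p ≤ 1) (m k : ℕ) :
    0 ≤ binomProb m p k := by
  have h : (0:ℝ) ≤ 1 - p := by linarith
  exact mul_nonneg (mul_nonneg (Nat.cast_nonneg _) (pow_nonneg h0 _)) (pow_nonneg h _)

lemma binomProb_eq_zero {m k : ℕ} (h : m < k) (p : ℝ) : binomProb m p k = 0 := by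
  simp [binomProb, Nat.choose_eq_zero_of_lt h]

lemma sum_binomProb (m : ℕ) (p : ℝ) :
    ∑ k ∈ Finset.range (m + 1), binomProb m p k = 1 := by
  have h : ∑ k ∈ Finset.range (m + 1), binomProb m p k = (p + (1 - p)) ^ m := by
    rw [add_pow]
    apply Finset.sum_congr rfl
    intro k _
    unfold binomProb
    ring
  rw [h]
  norm_num

lemma sum_const_mul_binomProb (n : ℕ) (p c : ℝ) :
    ∑ k ∈ Finset.range (n + 1), c * binomProb n p k = c := by
  rw [← Finset.mul_sum, sum_binomProb, mul_one]

lemma binomProb_add (n₁ n₂ : ℕ) (p : ℝ) (j : ℕ) :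
    binomProb (n₁ + n₂) p j
      = ∑ x ∈ Finset.HasAntidiagonal.antidiagonal j, binomProb n₁ p x.1 * binomProb n₂ p x.2 := by
  unfold binomProb
  rw [Nat.add_choose_eq]
  push_cast
  rw [Finset.sum_mul, Finset.sum_mul]
  apply Finset.sum_congr rfl
  rintro ⟨a, b⟩ hx
  simp only [Finset.HasAntidiagonal.mem_antidiagonal] at hx
  subst hx
  by_cases ha : a ≤ n₁
  · by_cases hb : b ≤ n₂
    · have e : n₁ + n₂ - (a + b) = (n₁ - a) + (n₂ - b) := by omega
      rw [e, pow_add, pow_add]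
      ring
    · simp [Nat.choose_eq_zero_of_lt (by omega : n₂ < b)]
  · simp [Nat.choose_eq_zero_of_lt (by omega : n₁ < a)]

lemma sum_expand (n₁ n₂ : ℕ) (p : ℝ) (g : ℕ → ℝ) :
    ∑ j ∈ Finset.range (n₁ + n₂ + 1), g j * binomProb (n₁ + n₂) p j
      = ∑ j₁ ∈ Finset.range (n₁ + 1), ∑ j₂ ∈ Finset.range (n₂ + 1),
          g (j₁ + j₂) * (binomProb n₁ p j₁ * binomProb n₂ p j₂) := by
  have h1 : ∀ j ∈ Finset.range (n₁ + n₂ + 1), g j * binomProb (n₁ + n₂) p j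
      = ∑ x ∈ Finset.HasAntidiagonal.antidiagonal j,
          g (x.1 + x.2) * (binomProb n₁ p x.1 * binomProb n₂ p x.2) := by
    intro j _
    rw [binomProb_add, Finset.mul_sum]
    apply Finset.sum_congr rfl
    rintro ⟨a, b⟩ hx
    simp only [Finset.HasAntidiagonal.mem_antidiagonal] at hx
    rw [hx]
  rw [Finset.sum_congr rfl h1]
  have hdisj : (↑(Finset.range (n₁ + n₂ + 1)) : Set ℕ).PairwiseDisjoint
      (Finset.HasAntidiagonal.antidiagonal : ℕ → Finset (ℕ × ℕ)) := by
    intro i _ j _ hij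
    simp only [Finset.disjoint_left, Finset.HasAntidiagonal.mem_antidiagonal]
    intro x h1 h2
    omega
  rw [← Finset.sum_biUnion hdisj]
  have hsub : Finset.range (n₁ + 1) ×ˢ Finset.range (n₂ + 1)
      ⊆ (Finset.range (n₁ + n₂ + 1)).biUnion Finset.HasAntidiagonal.antidiagonal := by
    rintro ⟨a, b⟩ h
    simp only [Finset.mem_product, Finset.mem_range] at h
    simp only [Finset.mem_biUnion, Finset.mem_range, Finset.HasAntidiagonal.mem_antidiagonal]
    exact ⟨a + b, by omega, rfl⟩
  rw [← Finset.sum_subset hsub]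
  · rw [Finset.sum_product]
  · rintro ⟨a, b⟩ _ hnot
    simp only [Finset.mem_product, Finset.mem_range, not_and_or, not_lt] at hnot
    rcases hnot with h | h
    · rw [binomProb_eq_zero (by omega) p]
      ring
    · rw [binomProb_eq_zero (p := p) (by omega : n₂ < b)]
      ring

lemma pow_swap_ineq {P Q : ℝ} (hQ0 : 0 ≤ Q) (hQP : Q ≤ P) (hP1 : P ≤ 1)
    {a b n : ℕ} (hab : a ≤ b) (hbn : b ≤ n) :
    P ^ a * (1 - P) ^ (n - a) * (Q ^ b * (1 - Q) ^ (n - b))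
      ≤ P ^ b * (1 - P) ^ (n - b) * (Q ^ a * (1 - Q) ^ (n - a)) := by
  have hP0 : 0 ≤ P := hQ0.trans hQP
  have h1P : (0:ℝ) ≤ 1 - P := by linarith
  have h1Q : (0:ℝ) ≤ 1 - Q := by linarith
  obtain ⟨d, rfl⟩ := Nat.exists_eq_add_of_le hab
  have e1 : n - a = (n - (a + d)) + d := by omega
  rw [e1]
  have base : (0:ℝ) ≤ P ^ a * Q ^ a * (1 - P) ^ (n - (a + d)) * (1 - Q) ^ (n - (a + d)) := by
    have h1 := pow_nonneg hP0 a
    have h2 := pow_nonneg hQ0 a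
    have h3 := pow_nonneg h1P (n - (a + d))
    have h4 := pow_nonneg h1Q (n - (a + d))
    positivity
  have hkey : (Q * (1 - P)) ^ d ≤ (P * (1 - Q)) ^ d := by
    apply pow_le_pow_left₀ (mul_nonneg hQ0 h1P)
    nlinarith
  calc P ^ a * (1 - P) ^ (n - (a + d) + d) * (Q ^ (a + d) * (1 - Q) ^ (n - (a + d)))
      = (P ^ a * Q ^ a * (1 - P) ^ (n - (a + d)) * (1 - Q) ^ (n - (a + d)))
          * (Q * (1 - P)) ^ d := by
        rw [pow_add, pow_add, mul_pow]; ring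
    _ ≤ (P ^ a * Q ^ a * (1 - P) ^ (n - (a + d)) * (1 - Q) ^ (n - (a + d)))
          * (P * (1 - Q)) ^ d := mul_le_mul_of_nonneg_left hkey base
    _ = P ^ (a + d) * (1 - P) ^ (n - (a + d)) * (Q ^ a * (1 - Q) ^ (n - (a + d) + d)) := by
        rw [pow_add, pow_add, mul_pow]; ring

lemma quad_swap {P Q : ℝ} (hQ0 : 0 ≤ Q) (hQP : Q ≤ P) (hP1 : P ≤ 1)
    {n₁ n₂ j₁ k₁ j₂ k₂ : ℕ} (hj₁ : j₁ ≤ n₁) (hk₁ : k₁ ≤ n₁) (hj₂ : j₂ ≤ n₂) (hk₂ : k₂ ≤ n₂)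
    (hsum : j₁ + j₂ ≤ k₁ + k₂) :
    binomProb n₁ P j₁ * binomProb n₂ P j₂ * (binomProb n₁ Q k₁ * binomProb n₂ Q k₂)
      ≤ binomProb n₁ P k₁ * binomProb n₂ P k₂ * (binomProb n₁ Q j₁ * binomProb n₂ Q j₂) := by
  have hC : (0:ℝ) ≤ (n₁.choose j₁ : ℝ) * (n₁.choose k₁) * (n₂.choose j₂) * (n₂.choose k₂) := by
    positivity
  have hpow := pow_swap_ineq hQ0 hQP hP1 (a := j₁ + j₂) (b := k₁ + k₂) (n := n₁ + n₂)
    hsum (by omega)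
  rw [show n₁ + n₂ - (j₁ + j₂) = (n₁ - j₁) + (n₂ - j₂) from by omega,
      show n₁ + n₂ - (k₁ + k₂) = (n₁ - k₁) + (n₂ - k₂) from by omega] at hpow
  calc binomProb n₁ P j₁ * binomProb n₂ P j₂ * (binomProb n₁ Q k₁ * binomProb n₂ Q k₂)
      = ((n₁.choose j₁ : ℝ) * (n₁.choose k₁) * (n₂.choose j₂) * (n₂.choose k₂))
          * (P ^ (j₁ + j₂) * (1 - P) ^ ((n₁ - j₁) + (n₂ - j₂))
              * (Q ^ (k₁ + k₂) * (1 - Q) ^ ((n₁ - k₁) + (n₂ - k₂)))) := by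
        unfold binomProb; rw [pow_add, pow_add, pow_add, pow_add]; ring
    _ ≤ ((n₁.choose j₁ : ℝ) * (n₁.choose k₁) * (n₂.choose j₂) * (n₂.choose k₂))
          * (P ^ (k₁ + k₂) * (1 - P) ^ ((n₁ - k₁) + (n₂ - k₂))
              * (Q ^ (j₁ + j₂) * (1 - Q) ^ ((n₁ - j₁) + (n₂ - j₂)))) :=
        mul_le_mul_of_nonneg_left hpow hC
    _ = binomProb n₁ P k₁ * binomProb n₂ P k₂ * (binomProb n₁ Q j₁ * binomProb n₂ Q j₂) := by
        unfold binomProb; rw [pow_add, pow_add, pow_add, pow_add]; ring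

lemma Pn_eq (m : ℕ) (p q : ℝ) :
    Pn m p q = ∑ j ∈ Finset.range (m + 1), (∑ k ∈ Finset.range (m + 1),
      (if j ≤ k then (1:ℝ) else 0) * binomProb m (min p q) k) * binomProb m (max p q) j := by
  unfold Pn Pmn prGE prGEshift
  apply Finset.sum_congr rfl
  intro j _
  rw [Finset.sum_mul]
  apply Finset.sum_congr rfl
  intro k _
  have hc : ((j:ℝ) - 0 ≤ (k:ℝ)) ↔ (j ≤ k) := by rw [sub_zero, Nat.cast_le]
  rw [if_congr hc rfl rfl]
  split_ifs with h <;> ring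

lemma quad_comm {M : Type*} [AddCommMonoid M] (s t : Finset ℕ) (f : ℕ → ℕ → ℕ → ℕ → M) :
    (∑ a ∈ s, ∑ b ∈ t, ∑ c ∈ s, ∑ d ∈ t, f a b c d)
      = ∑ a ∈ s, ∑ b ∈ t, ∑ c ∈ s, ∑ d ∈ t, f c d a b := by
  have h1 : ∀ (g : ℕ → ℕ → M), (∑ a ∈ s, ∑ b ∈ t, g a b) = ∑ x ∈ s ×ˢ t, g x.1 x.2 := by
    intro g
    rw [Finset.sum_product]
  rw [h1 (fun a b => ∑ c ∈ s, ∑ d ∈ t, f a b c d),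
      h1 (fun a b => ∑ c ∈ s, ∑ d ∈ t, f c d a b)]
  have h2 : ∀ x : ℕ × ℕ, (∑ c ∈ s, ∑ d ∈ t, f x.1 x.2 c d) = ∑ y ∈ s ×ˢ t, f x.1 x.2 y.1 y.2 := by
    intro x
    rw [h1 (fun c d => f x.1 x.2 c d)]
  have h3 : ∀ x : ℕ × ℕ, (∑ c ∈ s, ∑ d ∈ t, f c d x.1 x.2) = ∑ y ∈ s ×ˢ t, f y.1 y.2 x.1 x.2 := by
    intro x
    rw [h1 (fun c d => f c d x.1 x.2)]
  simp only [h2, h3]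
  exact Finset.sum_comm

theorem P_half_monotone
    (n₁ n₂ : ℕ) (p q : ℝ) (hp0 : 0 ≤ p) (hp1 : p ≤ 1) (hq0 : 0 ≤ q) (hq1 : q ≤ 1) :
    (1 / 2) * Pn (n₁ + n₂) p q ≤ Pn n₁ p q := by
  set P := max p q with hPdef
  set Q := min p q with hQdef
  have hQ0 : 0 ≤ Q := le_min hp0 hq0
  have hP1 : P ≤ 1 := max_le hp1 hq1
  have hQP : Q ≤ P := min_le_max
  have hP0 : 0 ≤ P := hQ0.trans hQP
  have hQ1 : Q ≤ 1 := hQP.trans hP1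
  have hbP := binomProb_nonneg hP0 hP1
  have hbQ := binomProb_nonneg hQ0 hQ1
  have hL : Pn (n₁ + n₂) p q
      = ∑ j₁ ∈ Finset.range (n₁ + 1), ∑ j₂ ∈ Finset.range (n₂ + 1),
          ∑ k₁ ∈ Finset.range (n₁ + 1), ∑ k₂ ∈ Finset.range (n₂ + 1),
            ((if j₁ + j₂ ≤ k₁ + k₂ then (1:ℝ) else 0)
              * (binomProb n₁ Q k₁ * binomProb n₂ Q k₂))
              * (binomProb n₁ P j₁ * binomProb n₂ P j₂) := by
    rw [Pn_eq]
    rw [sum_expand n₁ n₂ P (fun j => ∑ k ∈ Finset.range (n₁ + n₂ + 1),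
      (if j ≤ k then (1:ℝ) else 0) * binomProb (n₁ + n₂) Q k)]
    apply Finset.sum_congr rfl
    intro j₁ _
    apply Finset.sum_congr rfl
    intro j₂ _
    rw [sum_expand n₁ n₂ Q (fun k => if j₁ + j₂ ≤ k then (1:ℝ) else 0)]
    rw [Finset.sum_mul]
    apply Finset.sum_congr rfl
    intro k₁ _
    rw [Finset.sum_mul]
  rw [hL, Pn_eq]
  set R₁ := Finset.range (n₁ + 1) with hR₁
  set R₂ := Finset.range (n₂ + 1) with hR₂
  have hfactor : ∀ (c : ℕ → ℕ → Prop) [∀ a b, Decidable (c a b)],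
      (∑ j₁ ∈ R₁, ∑ j₂ ∈ R₂, ∑ k₁ ∈ R₁, ∑ k₂ ∈ R₂,
          ((if c j₁ k₁ then (1:ℝ) else 0) * (binomProb n₁ Q k₁ * binomProb n₂ Q k₂))
            * (binomProb n₁ P j₁ * binomProb n₂ P j₂))
        = ∑ j ∈ R₁, (∑ k ∈ R₁, (if c j k then (1:ℝ) else 0) * binomProb n₁ Q k)
            * binomProb n₁ P j := by
    intro c _
    apply Finset.sum_congr rfl
    intro j₁ _
    calc ∑ j₂ ∈ R₂, ∑ k₁ ∈ R₁, ∑ k₂ ∈ R₂,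
          ((if c j₁ k₁ then (1:ℝ) else 0) * (binomProb n₁ Q k₁ * binomProb n₂ Q k₂))
            * (binomProb n₁ P j₁ * binomProb n₂ P j₂)
        = ∑ j₂ ∈ R₂, ∑ k₁ ∈ R₁,
            ((if c j₁ k₁ then (1:ℝ) else 0) * binomProb n₁ Q k₁)
              * (binomProb n₁ P j₁ * binomProb n₂ P j₂) := by
          apply Finset.sum_congr rfl
          intro j₂ _
          apply Finset.sum_congr rfl
          intro k₁ _
          calc ∑ k₂ ∈ R₂,
              ((if c j₁ k₁ then (1:ℝ) else 0) * (binomProb n₁ Q k₁ * binomProb n₂ Q k₂))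
                * (binomProb n₁ P j₁ * binomProb n₂ P j₂)
              = ∑ k₂ ∈ R₂,
                ((if c j₁ k₁ then (1:ℝ) else 0) * binomProb n₁ Q k₁
                  * (binomProb n₁ P j₁ * binomProb n₂ P j₂)) * binomProb n₂ Q k₂ := by
                apply Finset.sum_congr rfl
                intro k₂ _
                ring
            _ = (if c j₁ k₁ then (1:ℝ) else 0) * binomProb n₁ Q k₁
                  * (binomProb n₁ P j₁ * binomProb n₂ P j₂) :=
                sum_const_mul_binomProb n₂ Q _
            _ = ((if c j₁ k₁ then (1:ℝ) else 0) * binomProb n₁ Q k₁)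
                  * (binomProb n₁ P j₁ * binomProb n₂ P j₂) := by ring
      _ = ∑ j₂ ∈ R₂,
            (∑ k₁ ∈ R₁, (if c j₁ k₁ then (1:ℝ) else 0) * binomProb n₁ Q k₁)
              * (binomProb n₁ P j₁ * binomProb n₂ P j₂) := by
          apply Finset.sum_congr rfl
          intro j₂ _
          rw [Finset.sum_mul]
      _ = ∑ j₂ ∈ R₂,
            ((∑ k₁ ∈ R₁, (if c j₁ k₁ then (1:ℝ) else 0) * binomProb n₁ Q k₁)
              * binomProb n₁ P j₁) * binomProb n₂ P j₂ := by
          apply Finset.sum_congr rfl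
          intro j₂ _
          ring
      _ = (∑ k₁ ∈ R₁, (if c j₁ k₁ then (1:ℝ) else 0) * binomProb n₁ Q k₁)
            * binomProb n₁ P j₁ := sum_const_mul_binomProb n₂ P _
  have hU := hfactor (fun a b => a ≤ b)
  have hterm : ∀ j₁ ∈ R₁, ∀ j₂ ∈ R₂, ∀ k₁ ∈ R₁, ∀ k₂ ∈ R₂,
      ((if j₁ + j₂ ≤ k₁ + k₂ then (1:ℝ) else 0)
          * (binomProb n₁ Q k₁ * binomProb n₂ Q k₂))
          * (binomProb n₁ P j₁ * binomProb n₂ P j₂)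
        ≤ ((if j₁ ≤ k₁ then (1:ℝ) else 0)
            * (binomProb n₁ Q k₁ * binomProb n₂ Q k₂))
            * (binomProb n₁ P j₁ * binomProb n₂ P j₂)
          + ((if k₁ < j₁ ∧ j₁ + j₂ ≤ k₁ + k₂ then (1:ℝ) else 0)
              * (binomProb n₁ Q j₁ * binomProb n₂ Q j₂))
              * (binomProb n₁ P k₁ * binomProb n₂ P k₂) := by
    intro j₁ hj₁ j₂ hj₂ k₁ hk₁ k₂ hk₂
    rw [hR₁] at hj₁ hk₁
    rw [hR₂] at hj₂ hk₂
    rw [Finset.mem_range] at hj₁ hj₂ hk₁ hk₂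
    have hX : (0:ℝ) ≤ (binomProb n₁ Q k₁ * binomProb n₂ Q k₂)
        * (binomProb n₁ P j₁ * binomProb n₂ P j₂) := by
      have h1 := hbP n₁ j₁; have h2 := hbP n₂ j₂
      have h3 := hbQ n₁ k₁; have h4 := hbQ n₂ k₂
      positivity
    have hY : (0:ℝ) ≤ (binomProb n₁ Q j₁ * binomProb n₂ Q j₂)
        * (binomProb n₁ P k₁ * binomProb n₂ P k₂) := by
      have h1 := hbP n₁ k₁; have h2 := hbP n₂ k₂
      have h3 := hbQ n₁ j₁; have h4 := hbQ n₂ j₂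
      positivity
    by_cases h1 : j₁ ≤ k₁
    · have h2 : ¬ (k₁ < j₁ ∧ j₁ + j₂ ≤ k₁ + k₂) := by omega
      rw [if_neg h2]
      by_cases h3 : j₁ + j₂ ≤ k₁ + k₂
      · rw [if_pos h3, if_pos h1]; linarith
      · rw [if_neg h3, if_pos h1]; linarith
    · rw [if_neg h1]
      by_cases h3 : j₁ + j₂ ≤ k₁ + k₂
      · have h2 : k₁ < j₁ ∧ j₁ + j₂ ≤ k₁ + k₂ := ⟨by omega, h3⟩
        rw [if_pos h3, if_pos h2]
        have hswap := quad_swap hQ0 hQP hP1 (n₁ := n₁) (n₂ := n₂)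
          (by omega : j₁ ≤ n₁) (by omega : k₁ ≤ n₁) (by omega : j₂ ≤ n₂) (by omega : k₂ ≤ n₂) h3
        calc (1:ℝ) * (binomProb n₁ Q k₁ * binomProb n₂ Q k₂)
              * (binomProb n₁ P j₁ * binomProb n₂ P j₂)
            = binomProb n₁ P j₁ * binomProb n₂ P j₂
                * (binomProb n₁ Q k₁ * binomProb n₂ Q k₂) := by ring
          _ ≤ binomProb n₁ P k₁ * binomProb n₂ P k₂
                * (binomProb n₁ Q j₁ * binomProb n₂ Q j₂) := hswap
          _ = 0 * (binomProb n₁ Q k₁ * binomProb n₂ Q k₂)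
                * (binomProb n₁ P j₁ * binomProb n₂ P j₂)
              + 1 * (binomProb n₁ Q j₁ * binomProb n₂ Q j₂)
                * (binomProb n₁ P k₁ * binomProb n₂ P k₂) := by ring
      · have h2 : ¬ (k₁ < j₁ ∧ j₁ + j₂ ≤ k₁ + k₂) := by omega
        rw [if_neg h3, if_neg h2]; linarith
  have hA : (∑ j₁ ∈ R₁, ∑ j₂ ∈ R₂, ∑ k₁ ∈ R₁, ∑ k₂ ∈ R₂,
        ((if j₁ + j₂ ≤ k₁ + k₂ then (1:ℝ) else 0)
          * (binomProb n₁ Q k₁ * binomProb n₂ Q k₂))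
          * (binomProb n₁ P j₁ * binomProb n₂ P j₂))
      ≤ (∑ j₁ ∈ R₁, ∑ j₂ ∈ R₂, ∑ k₁ ∈ R₁, ∑ k₂ ∈ R₂,
          ((if j₁ ≤ k₁ then (1:ℝ) else 0)
            * (binomProb n₁ Q k₁ * binomProb n₂ Q k₂))
            * (binomProb n₁ P j₁ * binomProb n₂ P j₂))
        + ∑ j₁ ∈ R₁, ∑ j₂ ∈ R₂, ∑ k₁ ∈ R₁, ∑ k₂ ∈ R₂,
            ((if k₁ < j₁ ∧ j₁ + j₂ ≤ k₁ + k₂ then (1:ℝ) else 0)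
              * (binomProb n₁ Q j₁ * binomProb n₂ Q j₂))
              * (binomProb n₁ P k₁ * binomProb n₂ P k₂) := by
    rw [← Finset.sum_add_distrib]
    apply Finset.sum_le_sum
    intro j₁ hj₁
    rw [← Finset.sum_add_distrib]
    apply Finset.sum_le_sum
    intro j₂ hj₂
    rw [← Finset.sum_add_distrib]
    apply Finset.sum_le_sum
    intro k₁ hk₁
    rw [← Finset.sum_add_distrib]
    apply Finset.sum_le_sum
    intro k₂ hk₂
    exact hterm j₁ hj₁ j₂ hj₂ k₁ hk₁ k₂ hk₂
  have hC : (∑ j₁ ∈ R₁, ∑ j₂ ∈ R₂, ∑ k₁ ∈ R₁, ∑ k₂ ∈ R₂,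
        ((if k₁ < j₁ ∧ j₁ + j₂ ≤ k₁ + k₂ then (1:ℝ) else 0)
          * (binomProb n₁ Q j₁ * binomProb n₂ Q j₂))
          * (binomProb n₁ P k₁ * binomProb n₂ P k₂))
      = ∑ j₁ ∈ R₁, ∑ j₂ ∈ R₂, ∑ k₁ ∈ R₁, ∑ k₂ ∈ R₂,
          ((if j₁ < k₁ ∧ k₁ + k₂ ≤ j₁ + j₂ then (1:ℝ) else 0)
            * (binomProb n₁ Q k₁ * binomProb n₂ Q k₂))
            * (binomProb n₁ P j₁ * binomProb n₂ P j₂) :=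
    quad_comm R₁ R₂ (fun a b c d =>
      ((if c < a ∧ a + b ≤ c + d then (1:ℝ) else 0)
        * (binomProb n₁ Q a * binomProb n₂ Q b))
        * (binomProb n₁ P c * binomProb n₂ P d))
  have hD : (∑ j₁ ∈ R₁, ∑ j₂ ∈ R₂, ∑ k₁ ∈ R₁, ∑ k₂ ∈ R₂,
        ((if j₁ < k₁ ∧ k₁ + k₂ ≤ j₁ + j₂ then (1:ℝ) else 0)
          * (binomProb n₁ Q k₁ * binomProb n₂ Q k₂))
          * (binomProb n₁ P j₁ * binomProb n₂ P j₂))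
      ≤ ∑ j₁ ∈ R₁, ∑ j₂ ∈ R₂, ∑ k₁ ∈ R₁, ∑ k₂ ∈ R₂,
          ((if j₁ ≤ k₁ then (1:ℝ) else 0)
            * (binomProb n₁ Q k₁ * binomProb n₂ Q k₂))
            * (binomProb n₁ P j₁ * binomProb n₂ P j₂) := by
    apply Finset.sum_le_sum
    intro j₁ _
    apply Finset.sum_le_sum
    intro j₂ _
    apply Finset.sum_le_sum
    intro k₁ _
    apply Finset.sum_le_sum
    intro k₂ _
    have hX : (0:ℝ) ≤ (binomProb n₁ Q k₁ * binomProb n₂ Q k₂)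
        * (binomProb n₁ P j₁ * binomProb n₂ P j₂) := by
      have h1 := hbP n₁ j₁; have h2 := hbP n₂ j₂
      have h3 := hbQ n₁ k₁; have h4 := hbQ n₂ k₂
      positivity
    by_cases h : j₁ < k₁ ∧ k₁ + k₂ ≤ j₁ + j₂
    · rw [if_pos h, if_pos (by omega : j₁ ≤ k₁)]
    · rw [if_neg h]
      split_ifs <;> linarith
  linarith [hA, hU, hC ▸ hD]
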